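/- In any (possibly infinite) one-to-one marriage market in which each agent's preference list has order type at most ω, there exists a man-optimal stable matching: a stable matching μ* such that every man weakly prefers his outcome under μ* to his outcome under any other stable matching. -/

import Mathlib

/-- A one-to-one marriage market: each man `m` has a preference list over women
encoded by an injective ranking `mPref m : W → Option ℕ` (rank `some r`, with
smaller rank preferred, `none` meaning unacceptable; such a list is either
finite or of order type ω), and symmetrically for women. -/
structure MarriageMarket (M W : Type*) where
  mPref : M → W → Option ℕ
  wPref : W → M → Option ℕ
  mPref_inj : ∀ m w w' r, mPref m w = some r → mPref m w' = some r → w = w'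
  wPref_inj : ∀ w m m' r, wPref w m = some r → wPref w m' = some r → m = m'

namespace MarriageMarket

variable {M W : Type*}

/-- A matching: each man is assigned at most one woman, and each woman is assigned
to at most one man. -/
def IsMatching (μ : M → Option W) : Prop :=
  ∀ m m' w, μ m = some w → μ m' = some w → m = m'

/-- Man `m` strictly prefers woman `w` to the outcome `o` (a partner or being unmatched). -/
def ManPrefers (E : MarriageMarket M W) (m : M) (w : W) (o : Option W) : Prop :=
  ∃ r, E.mPref m w = some r ∧
    (o = none ∨ ∃ w' r', o = some w' ∧ E.mPref m w' = some r' ∧ r < r')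

/-- Woman `w` strictly prefers man `m` to her assignment under the matching `μ`. -/
def WomanPrefers (E : MarriageMarket M W) (w : W) (m : M) (μ : M → Option W) : Prop :=
  ∃ r, E.wPref w m = some r ∧
    ((∀ m', μ m' ≠ some w) ∨ ∃ m' r', μ m' = some w ∧ E.wPref w m' = some r' ∧ r < r')

/-- `(m, w)` is a blocking pair for `μ`: each strictly prefers the other to their
current assignment (or to being unmatched). -/
def Blocks (E : MarriageMarket M W) (μ : M → Option W) (m : M) (w : W) : Prop :=
  ManPrefers E m w (μ m) ∧ WomanPrefers E w m μ

/-- A stable matching: a matching that is individually rational and has no blocking pair. -/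
def Stable (E : MarriageMarket M W) (μ : M → Option W) : Prop :=
  IsMatching μ ∧
  (∀ m w, μ m = some w → E.mPref m w ≠ none ∧ E.wPref w m ≠ none) ∧
  (∀ m w, ¬ Blocks E μ m w)

/-- Man `m` weakly prefers outcome `o` to outcome `o'`: they are equal, or `o` is a
woman he ranks above `o'` (including `o'` being unmatched). -/
def ManWeaklyPrefers (E : MarriageMarket M W) (m : M) (o o' : Option W) : Prop :=
  o = o' ∨ ∃ w, o = some w ∧ ManPrefers E m w o'

/-- A man-optimal stable matching: a stable matching that every man weakly prefers
to every other stable matching. -/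
def ManOptimal (E : MarriageMarket M W) (μ : M → Option W) : Prop :=
  Stable E μ ∧ ∀ ν : M → Option W, Stable E ν → ∀ m, ManWeaklyPrefers E m (μ m) (ν m)

end MarriageMarket

namespace GS

open MarriageMarket

variable {M W : Type*}

/-- Man `m` proposes to `w` given rejection state `R`: `w` is acceptable, has not
rejected `m`, and every strictly better acceptable woman has rejected `m`. -/
def Proposes (E : MarriageMarket M W) (R : M → W → Prop) (m : M) (w : W) : Prop :=
  ∃ r, E.mPref m w = some r ∧ ¬ R m w ∧
    ∀ w' r', E.mPref m w' = some r' → r' < r → R m w'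

/-- Rejections accumulated after `n` rounds of simultaneous deferred acceptance. -/
def Rej (E : MarriageMarket M W) : ℕ → M → W → Prop
  | 0, _, _ => False
  | n+1, m, w => Rej E n m w ∨ (Proposes E (Rej E n) m w ∧
      (E.wPref w m = none ∨ ∃ m' r' r, Proposes E (Rej E n) m' w ∧
        E.wPref w m' = some r' ∧ E.wPref w m = some r ∧ r' < r))

lemma rej_succ_iff (E : MarriageMarket M W) (n : ℕ) (m : M) (w : W) :
    Rej E (n+1) m w ↔ Rej E n m w ∨ (Proposes E (Rej E n) m w ∧
      (E.wPref w m = none ∨ ∃ m' r' r, Proposes E (Rej E n) m' w ∧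
        E.wPref w m' = some r' ∧ E.wPref w m = some r ∧ r' < r)) := Iff.rfl

lemma rej_zero (E : MarriageMarket M W) (m : M) (w : W) : ¬ Rej E 0 m w := fun h => h

lemma rej_mono (E : MarriageMarket M W) {n n' : ℕ} (h : n ≤ n') {m : M} {w : W} :
    Rej E n m w → Rej E n' m w := by
  induction h with
  | refl => exact id
  | step _ ih => exact fun hh => Or.inl (ih hh)

lemma proposes_persist (E : MarriageMarket M W) {n : ℕ} {m : M} {w : W}
    (hp : Proposes E (Rej E n) m w) (hnr : ¬ Rej E (n+1) m w) :
    Proposes E (Rej E (n+1)) m w := by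
  obtain ⟨r, hr, _, hb⟩ := hp
  exact ⟨r, hr, hnr, fun w' r' h1 h2 => Or.inl (hb w' r' h1 h2)⟩

lemma wPref_some_of_not_rej (E : MarriageMarket M W) {n : ℕ} {m : M} {w : W}
    (hp : Proposes E (Rej E n) m w) (hnr : ¬ Rej E (n+1) m w) :
    ∃ r, E.wPref w m = some r := by
  cases h : E.wPref w m with
  | none => exact absurd (Or.inr ⟨hp, Or.inl h⟩) hnr
  | some r => exact ⟨r, rfl⟩

/-- The set of ranks of women acceptable to `m` who never reject him. -/
def goodRanks (E : MarriageMarket M W) (m : M) : Set ℕ :=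
  {r | ∃ w, E.mPref m w = some r ∧ ∀ n, ¬ Rej E n m w}

open Classical in
/-- The limit matching of deferred acceptance: `m` is matched to his best
acceptable woman who never rejects him, if any. -/
noncomputable def muStar (E : MarriageMarket M W) (m : M) : Option W :=
  if h : (goodRanks E m).Nonempty then
    some (Nat.sInf_mem h).choose
  else none

lemma muStar_spec {E : MarriageMarket M W} {m : M} {w : W} (h : muStar E m = some w) :
    (goodRanks E m).Nonempty ∧ E.mPref m w = some (sInf (goodRanks E m)) ∧
      ∀ n, ¬ Rej E n m w := by
  classical
  unfold muStar at h
  split_ifs at h with hne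
  · obtain ⟨h1, h2⟩ := (Nat.sInf_mem hne).choose_spec
    injection h with h; subst h
    exact ⟨hne, h1, h2⟩

lemma muStar_some_of_nonempty {E : MarriageMarket M W} {m : M}
    (h : (goodRanks E m).Nonempty) : ∃ w, muStar E m = some w := by
  classical
  cases hμ : muStar E m with
  | none =>
    unfold muStar at hμ
    rw [dif_pos h] at hμ
    exact nomatch hμ
  | some w => exact ⟨w, rfl⟩

/-- All women of rank below `k` who ever reject `m` have done so by a common stage. -/
lemma rej_bound (E : MarriageMarket M W) (m : M) :
    ∀ k : ℕ, (∀ w' r', E.mPref m w' = some r' → r' < k → ∃ n, Rej E n m w') →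
      ∃ N, ∀ w' r', E.mPref m w' = some r' → r' < k → Rej E N m w' := by
  intro k
  induction k with
  | zero => exact fun _ => ⟨0, fun w' r' _ h2 => absurd h2 (Nat.not_lt_zero _)⟩
  | succ k ih =>
    intro h
    obtain ⟨N₁, hN₁⟩ := ih (fun w' r' h1 h2 => h w' r' h1 (h2.trans (Nat.lt_succ_self k)))
    by_cases hk : ∃ w', E.mPref m w' = some k
    · obtain ⟨wk, hwk⟩ := hk
      obtain ⟨nk, hnk⟩ := h wk k hwk (Nat.lt_succ_self k)
      refine ⟨max N₁ nk, fun w' r' h1 h2 => ?_⟩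
      rcases Nat.lt_succ_iff_lt_or_eq.mp h2 with h3 | h3
      · exact rej_mono E (le_max_left _ _) (hN₁ w' r' h1 h3)
      · subst h3
        have : w' = wk := E.mPref_inj m w' wk r' h1 hwk
        subst this
        exact rej_mono E (le_max_right _ _) hnk
    · refine ⟨N₁, fun w' r' h1 h2 => ?_⟩
      rcases Nat.lt_succ_iff_lt_or_eq.mp h2 with h3 | h3
      · exact hN₁ w' r' h1 h3
      · subst h3
        exact (hk ⟨w', h1⟩).elim

/-- If `muStar` matches `m` to `w`, then from some stage on `m` proposes to `w`. -/
lemma muStar_eventually_proposes {E : MarriageMarket M W} {m : M} {w : W}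
    (h : muStar E m = some w) :
    ∃ N, ∀ n, N ≤ n → Proposes E (Rej E n) m w := by
  obtain ⟨hne, hacc, hnr⟩ := muStar_spec h
  have hbet : ∀ w' r', E.mPref m w' = some r' → r' < sInf (goodRanks E m) →
      ∃ n, Rej E n m w' := by
    intro w' r' h1 h2
    by_contra hc
    push_neg at hc
    have hmem : r' ∈ goodRanks E m := ⟨w', h1, hc⟩
    exact absurd (Nat.sInf_le hmem) (Nat.not_le.mpr h2)
  obtain ⟨N, hN⟩ := rej_bound E m _ hbet
  exact ⟨N, fun n hn => ⟨_, hacc, hnr n,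
    fun w' r' h1 h2 => rej_mono E hn (hN w' r' h1 h2)⟩⟩

lemma muStar_matching (E : MarriageMarket M W) : IsMatching (muStar E) := by
  intro m m' w h h'
  obtain ⟨N, hN⟩ := muStar_eventually_proposes h
  obtain ⟨N', hN'⟩ := muStar_eventually_proposes h'
  have hnr := (muStar_spec h).2.2
  have hnr' := (muStar_spec h').2.2
  set n := max N N' with hn
  have p := hN n (le_max_left _ _)
  have p' := hN' n (le_max_right _ _)
  obtain ⟨r, hr⟩ := wPref_some_of_not_rej E p (hnr (n+1))
  obtain ⟨r', hr'⟩ := wPref_some_of_not_rej E p' (hnr' (n+1))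
  rcases lt_trichotomy r r' with hlt | heq | hlt
  · exact absurd (Or.inr ⟨p', Or.inr ⟨m, r, r', p, hr, hr', hlt⟩⟩) (hnr' (n+1))
  · exact E.wPref_inj w m m' r hr (heq ▸ hr')
  · exact absurd (Or.inr ⟨p, Or.inr ⟨m', r', r, p', hr', hr, hlt⟩⟩) (hnr (n+1))

/-- If some man with a `w`-rank proposes to `w` at some stage, then `w` ends up
matched under `muStar` to a man ranked at least as well. -/
lemma partner_of_proposal {E : MarriageMarket M W} {w : W} {n₀ : ℕ} {m₁ : M} {r₁ : ℕ}
    (hp : Proposes E (Rej E n₀) m₁ w) (hr : E.wPref w m₁ = some r₁) :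
    ∃ ms rs, muStar E ms = some w ∧ E.wPref w ms = some rs ∧ rs ≤ r₁ := by
  set S : Set ℕ :=
    {r | ∃ n, n₀ ≤ n ∧ ∃ m', Proposes E (Rej E n) m' w ∧ E.wPref w m' = some r} with hSdef
  have hS : r₁ ∈ S := ⟨n₀, le_refl _, m₁, hp, hr⟩
  have hne : S.Nonempty := ⟨r₁, hS⟩
  obtain ⟨N, hN, ms, hps, hrs⟩ := Nat.sInf_mem hne
  have key : ∀ k, Proposes E (Rej E (N + k)) ms w := by
    intro k
    induction k with
    | zero => exact hps
    | succ k ih =>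
      have hnot : ¬ Rej E (N + k + 1) ms w := by
        rintro (h | ⟨hp2, hc⟩)
        · exact ih.choose_spec.2.1 h
        · rcases hc with hnone | ⟨m', r', rr, hp', hw', hwm, hlt⟩
          · rw [hnone] at hrs; exact nomatch hrs
          · have h1 : rr = sInf S := by rw [hwm] at hrs; exact Option.some.inj hrs
            have h2 : r' ∈ S := ⟨N + k, le_trans hN (Nat.le_add_right _ _), m', hp', hw'⟩
            have := Nat.sInf_le h2
            omega
      exact proposes_persist E ih hnot
  have hnever : ∀ n, ¬ Rej E n ms w := by
    intro n
    rcases le_or_gt n N with hle | hlt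
    · intro hr2
      exact (key 0).choose_spec.2.1 (rej_mono E hle hr2)
    · intro hr2
      have hn : n = N + (n - N) := by omega
      exact (key (n - N)).choose_spec.2.1 (hn ▸ hr2)
  obtain ⟨rms, hmw, _, hbet⟩ := hps
  have hg : rms ∈ goodRanks E ms := ⟨w, hmw, hnever⟩
  obtain ⟨w0, hw0⟩ := muStar_some_of_nonempty ⟨rms, hg⟩
  obtain ⟨_, hacc0, hnr0⟩ := muStar_spec hw0
  have hle : sInf (goodRanks E ms) ≤ rms := Nat.sInf_le hg
  rcases eq_or_lt_of_le hle with heq | hlt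
  · have : w0 = w := E.mPref_inj ms w0 w rms (heq ▸ hacc0) hmw
    subst this
    exact ⟨ms, sInf S, hw0, hrs, Nat.sInf_le hS⟩
  · exact absurd (hbet w0 _ hacc0 hlt) (hnr0 N)

lemma muStar_stable (E : MarriageMarket M W) : Stable E (muStar E) := by
  refine ⟨muStar_matching E, ?_, ?_⟩
  · intro m w h
    obtain ⟨_, hacc, hnr⟩ := muStar_spec h
    obtain ⟨N, hN⟩ := muStar_eventually_proposes h
    obtain ⟨r, hr⟩ := wPref_some_of_not_rej E (hN N le_rfl) (hnr (N+1))
    exact ⟨by rw [hacc]; simp, by rw [hr]; simp⟩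
  · classical
    rintro m w ⟨⟨r, hmr, hcase⟩, ⟨rw, hwr, hwcase⟩⟩
    have hrej : ∃ n, Rej E n m w := by
      by_contra hc
      push_neg at hc
      have hg : r ∈ goodRanks E m := ⟨w, hmr, hc⟩
      rcases hcase with hnone | ⟨w', r', heq, hmr', hlt⟩
      · obtain ⟨w0, hw0⟩ := muStar_some_of_nonempty ⟨r, hg⟩
        rw [hnone] at hw0
        exact nomatch hw0
      · obtain ⟨_, hacc, _⟩ := muStar_spec heq
        have h1 : r' = sInf (goodRanks E m) := Option.some.inj (hmr'.symm.trans hacc)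
        have := Nat.sInf_le hg
        omega
    have h₁ := Nat.find_spec hrej
    have hn1 : Nat.find hrej ≠ 0 := by
      intro h
      rw [h] at h₁
      exact h₁
    obtain ⟨n₀, hn₀⟩ := Nat.exists_eq_succ_of_ne_zero hn1
    have hmin : ¬ Rej E n₀ m w := Nat.find_min hrej (by omega)
    rw [hn₀] at h₁
    rcases h₁ with h | ⟨hpm, hc⟩
    · exact hmin h
    rcases hc with hnone | ⟨m₁, r₁, rr, hp₁, hw₁, hwm, hlt⟩
    · rw [hnone] at hwr; exact nomatch hwr
    have hrr : rr = rw := by rw [hwm] at hwr; exact Option.some.inj hwr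
    obtain ⟨ms, rs, hmu, hws, hle⟩ := partner_of_proposal hp₁ hw₁
    rcases hwcase with hun | ⟨m'', r'', hmu'', hw'', hlt''⟩
    · exact hun ms hmu
    · have hmm : m'' = ms := muStar_matching E m'' ms w hmu'' hmu
      subst hmm
      have : r'' = rs := Option.some.inj (hw''.symm.trans hws)
      omega

/-- No woman ever rejects a man she is matched to in some stable matching. -/
lemma stable_never_rej {E : MarriageMarket M W} {ν : M → Option W} (hν : Stable E ν) :
    ∀ n m w, ν m = some w → ¬ Rej E n m w := by
  intro n
  induction n with
  | zero => exact fun _ _ _ h => h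
  | succ n ih =>
    rintro m w hmw (h | ⟨hp, hc⟩)
    · exact ih m w hmw h
    rcases hc with hnone | ⟨m₁, r₁, rr, hp₁, hw₁, hwm, hlt⟩
    · exact (hν.2.1 m w hmw).2 hnone
    obtain ⟨s, hs, hnr1, hbet1⟩ := hp₁
    apply hν.2.2 m₁ w
    constructor
    · refine ⟨s, hs, ?_⟩
      cases hcase : ν m₁ with
      | none => exact Or.inl rfl
      | some w₂ =>
        have hw2ne : w₂ ≠ w := by
          intro h
          subst h
          have hm : m₁ = m := hν.1 m₁ m w₂ hcase hmw
          subst hm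
          rw [hw₁] at hwm
          have := Option.some.inj hwm
          omega
        obtain ⟨hm2, _⟩ := hν.2.1 m₁ w₂ hcase
        cases h2 : E.mPref m₁ w₂ with
        | none => exact absurd h2 hm2
        | some s₂ =>
          refine Or.inr ⟨w₂, s₂, rfl, h2, ?_⟩
          rcases lt_trichotomy s s₂ with h3 | h3 | h3
          · exact h3
          · exact absurd (E.mPref_inj m₁ w w₂ s hs (h3 ▸ h2)).symm hw2ne
          · exact absurd (hbet1 w₂ s₂ h2 h3) (ih m₁ w₂ hcase)
    · exact ⟨r₁, hw₁, Or.inr ⟨m, rr, hmw, hwm, hlt⟩⟩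

end GS


open MarriageMarket in
/-- In any (possibly infinite) one-to-one marriage market with preference lists of
order type at most ω, there exists a man-optimal stable matching: a stable matching
that every man weakly prefers to any other stable matching. -/
theorem man_optimal_stable_matching_exists {M W : Type*} (E : MarriageMarket M W) :
    ∃ μ : M → Option W, ManOptimal E μ := by
  classical
  refine ⟨GS.muStar E, GS.muStar_stable E, ?_⟩
  intro ν hν m
  cases hνm : ν m with
  | none =>
    cases hμ : GS.muStar E m with
    | none => exact Or.inl rfl
    | some w0 =>
      obtain ⟨_, hacc, _⟩ := GS.muStar_spec hμ
      exact Or.inr ⟨w0, rfl, _, hacc, Or.inl rfl⟩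
  | some w =>
    have hnr : ∀ n, ¬ GS.Rej E n m w := fun n => GS.stable_never_rej hν n m w hνm
    obtain ⟨hmw, _⟩ := hν.2.1 m w hνm
    cases h2 : E.mPref m w with
    | none => exact absurd h2 hmw
    | some rw =>
      have hg : rw ∈ GS.goodRanks E m := ⟨w, h2, hnr⟩
      obtain ⟨w0, hw0⟩ := GS.muStar_some_of_nonempty ⟨rw, hg⟩
      obtain ⟨_, hacc0, _⟩ := GS.muStar_spec hw0
      have hle : sInf (GS.goodRanks E m) ≤ rw := Nat.sInf_le hg
      rcases eq_or_lt_of_le hle with heq | hlt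
      · have hww : w0 = w := E.mPref_inj m w0 w rw (heq ▸ hacc0) h2
        exact Or.inl (by rw [hw0, hww])
      · exact Or.inr ⟨w0, hw0, _, hacc0, Or.inr ⟨w, rw, rfl, h2, hlt⟩⟩
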